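/- Let n ≥ 3, let F be the unitary discrete Fourier transform on ℂ^(ZMod n), and let [I F] denote the n×2n matrix obtained by concatenating the n×n identity matrix with the matrix of F. If [I F] satisfies the (k,c)-width property for some positive integer k and some c > 0, then k ≤ 2c²·(√n + 1)²/(√(n/2) − 1). (In particular, stable ℓ₁ demixing with [I F] requires k = O(√n): the square-root bottleneck.) -/

import Mathlib

open scoped BigOperators

/-- Number of nonzero entries ("0-norm"). -/
noncomputable def norm0 {N : Type*} (x : N → ℂ) : ℕ := Nat.card {i // x i ≠ 0}

/-- The 1-norm. -/
noncomputable def norm1 {N : Type*} [Fintype N] (x : N → ℂ) : ℝ := ∑ i, ‖x i‖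

/-- The squared 2-norm. -/
noncomputable def norm2sq {N : Type*} [Fintype N] (x : N → ℂ) : ℝ := ∑ i, ‖x i‖ ^ 2

/-- Numerical sparsity: `ns x = ‖x‖₁² / ‖x‖₂²`. -/
noncomputable def ns {N : Type*} [Fintype N] (x : N → ℂ) : ℝ := norm1 x ^ 2 / norm2sq x

/-- The unitary discrete Fourier transform on `ℂ^(ZMod n)`. -/
noncomputable def dft (n : ℕ) [NeZero n] (x : ZMod n → ℂ) : ZMod n → ℂ := fun k =>
  (1 / Real.sqrt n : ℝ) *
    ∑ j : ZMod n, x j *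
      Complex.exp (-(2 * (Real.pi : ℂ) * Complex.I * (j.val : ℂ) * (k.val : ℂ)) / (n : ℂ))
/-- The matrix of the unitary discrete Fourier transform. -/
noncomputable def dftMatrix (n : ℕ) : Matrix (ZMod n) (ZMod n) ℂ :=
  Matrix.of fun k j =>
    (1 / Real.sqrt n : ℝ) *
      Complex.exp (-(2 * (Real.pi : ℂ) * Complex.I * (j.val : ℂ) * (k.val : ℂ)) / (n : ℂ))

set_option linter.dupNamespace false


open scoped BigOperators
open Real Finset

namespace SqrtAux

lemma summable_gauss_shift {t : ℝ} (ht : 0 < t) (b : ℝ) :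
    Summable (fun m : ℤ => Real.exp (-t * ((m : ℝ) + b) ^ 2)) := by
  have h := summable_pow_mul_jacobiTheta₂_term_bound (t * |b| / Real.pi)
      (T := t / Real.pi) (by positivity) 0
  refine Summable.of_nonneg_of_le (fun _ => (Real.exp_pos _).le) (fun m => ?_) h
  have hb : -(b * (m : ℝ)) ≤ |b| * |(m : ℝ)| := by
    rw [← abs_mul]; exact neg_le_abs _
  have hπ : (0:ℝ) < Real.pi := Real.pi_pos
  have hexp : -t * ((m : ℝ) + b) ^ 2 ≤
      -Real.pi * (t / Real.pi * (m:ℝ) ^ 2 - 2 * (t * |b| / Real.pi) * |(m:ℝ)|) := by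
    have h1 : -Real.pi * (t / Real.pi * (m:ℝ) ^ 2 - 2 * (t * |b| / Real.pi) * |(m:ℝ)|)
        = -t * (m:ℝ) ^ 2 + 2 * t * (|b| * |(m:ℝ)|) := by
      field_simp
      ring
    rw [h1]
    nlinarith [mul_le_mul_of_nonneg_left hb ht.le, mul_nonneg ht.le (sq_nonneg b)]
  calc Real.exp (-t * ((m : ℝ) + b) ^ 2)
      ≤ Real.exp (-Real.pi * (t / Real.pi * (m:ℝ) ^ 2 - 2 * (t * |b| / Real.pi) * |(m:ℝ)|)) :=
        Real.exp_le_exp.2 hexp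
    _ ≤ (|m| ^ 0 : ℝ) * Real.exp (-Real.pi * (t / Real.pi * (m:ℝ) ^ 2
          - 2 * (t * |b| / Real.pi) * |(m:ℝ)|)) := by
        norm_num
    _ = _ := by push_cast; norm_num

lemma summable_gauss_int {t : ℝ} (ht : 0 < t) :
    Summable (fun l : ℤ => Real.exp (-t * (l : ℝ) ^ 2)) := by
  simpa using summable_gauss_shift ht 0

lemma summable_gauss_nat {t : ℝ} (ht : 0 < t) :
    Summable (fun l : ℕ => Real.exp (-t * (l : ℝ) ^ 2)) := by
  have h := (summable_gauss_int ht).comp_injective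
    (Nat.cast_injective : Function.Injective ((↑) : ℕ → ℤ))
  refine h.congr fun l => ?_
  simp [Function.comp]

def zmodIntEquiv (n : ℕ) [NeZero n] : ZMod n × ℤ ≃ ℤ where
  toFun p := (p.1.val : ℤ) + p.2 * (n : ℤ)
  invFun l := ((l : ZMod n), l / (n : ℤ))
  left_inv p := by
    obtain ⟨j, m⟩ := p
    have hn : (0:ℤ) < (n:ℤ) := by exact_mod_cast Nat.pos_of_ne_zero (NeZero.ne n)
    have h1 : (((j.val : ℤ) + m * (n:ℤ) : ℤ) : ZMod n) = j := by
      push_cast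
      simp [ZMod.natCast_self, ZMod.natCast_rightInverse j]
    have h2 : ((j.val : ℤ) + m * (n:ℤ)) / (n:ℤ) = m := by
      rw [Int.add_mul_ediv_right _ _ hn.ne']
      rw [Int.ediv_eq_zero_of_lt (by positivity) (by exact_mod_cast ZMod.val_lt j), zero_add]
    exact Prod.ext h1 h2
  right_inv l := by
    have h : ((l : ZMod n).val : ℤ) = l % (n:ℤ) := ZMod.val_intCast l
    simp only [h]
    exact Int.emod_add_ediv_mul l n

lemma zmodIntEquiv_apply (n : ℕ) [NeZero n] (j : ZMod n) (m : ℤ) :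
    zmodIntEquiv n (j, m) = (j.val : ℤ) + m * n := rfl

attribute [irreducible] zmodIntEquiv

lemma sum_zmod_tsum {γ : Type*} [AddCommGroup γ] [UniformSpace γ] [IsUniformAddGroup γ]
    [CompleteSpace γ] [T3Space γ] (n : ℕ) [NeZero n] (f : ℤ → γ) (hf : Summable f) :
    ∑ j : ZMod n, ∑' m : ℤ, f ((j.val : ℤ) + m * n) = ∑' l : ℤ, f l := by
  have he : Summable (f ∘ zmodIntEquiv n) := ((zmodIntEquiv n).summable_iff (f := f)).2 hf
  have hinner : ∀ j : ZMod n, Summable fun m : ℤ => f (zmodIntEquiv n (j, m)) := by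
    intro j
    have hi : Function.Injective (fun m : ℤ => zmodIntEquiv n (j, m)) := fun m₁ m₂ h => by
      simpa using congrArg Prod.snd ((zmodIntEquiv n).injective h)
    have h2 := hf.comp_injective hi
    simpa [Function.comp_def] using h2
  calc ∑ j : ZMod n, ∑' m : ℤ, f ((j.val : ℤ) + m * n)
      = ∑' (j : ZMod n) (m : ℤ), f (zmodIntEquiv n (j, m)) := by
        rw [tsum_fintype]
        exact Finset.sum_congr rfl fun j _ => tsum_congr fun m => by
          rw [zmodIntEquiv_apply]
    _ = ∑' p : ZMod n × ℤ, f (zmodIntEquiv n p) := (Summable.tsum_prod' he hinner).symm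
    _ = ∑' l : ℤ, f l := (zmodIntEquiv n).tsum_eq f


noncomputable def gg (n : ℕ) [NeZero n] (j : ZMod n) : ℝ :=
  ∑' m : ℤ, Real.exp (-Real.pi * ((j.val : ℝ) + m * n) ^ 2 / n)

variable {n : ℕ} [NeZero n]

lemma npos : (0:ℝ) < n := by exact_mod_cast Nat.pos_of_ne_zero (NeZero.ne n)

lemma summable_gg (x : ℝ) :
    Summable (fun m : ℤ => Real.exp (-Real.pi * (x + m * n) ^ 2 / n)) := by
  have hn : (0:ℝ) < n := npos
  have h := summable_gauss_shift (t := Real.pi * n) (by positivity) (x / n)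
  refine h.congr fun m => ?_
  congr 1
  field_simp
  ring

lemma gg_nonneg (j : ZMod n) : 0 ≤ gg n j :=
  tsum_nonneg fun _ => (Real.exp_pos _).le

lemma sum_gg_eq :
    ∑ j : ZMod n, gg n j = ∑' l : ℤ, Real.exp (-Real.pi * (l:ℝ) ^ 2 / n) := by
  have hn : (0:ℝ) < n := npos
  have hf : Summable (fun l : ℤ => Real.exp (-Real.pi * (l:ℝ) ^ 2 / n)) := by
    refine (summable_gauss_shift (t := Real.pi / n) (by positivity) 0).congr fun m => ?_
    rw [add_zero]
    congr 1
    ring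
  rw [← sum_zmod_tsum n _ hf]
  refine Finset.sum_congr rfl fun j _ => ?_
  unfold gg
  refine tsum_congr fun m => ?_
  congr 1
  push_cast
  ring

end SqrtAux
namespace SqrtAux2
open Real Finset
open SqrtAux

lemma summable_gauss_nat1 {t : ℝ} (ht : 0 < t) :
    Summable (fun l : ℕ => Real.exp (-t * ((l:ℝ) + 1) ^ 2)) := by
  have h := (summable_nat_add_iff 1).2 (summable_gauss_nat ht)
  refine h.congr fun l => ?_
  push_cast
  ring_nf

lemma tsum_int_decomp {t : ℝ} (ht : 0 < t) :
    ∑' l : ℤ, Real.exp (-t * (l : ℝ) ^ 2)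
      = 1 + 2 * ∑' l : ℕ, Real.exp (-t * ((l:ℝ) + 1) ^ 2) := by
  have h1 : Summable (fun l : ℕ => Real.exp (-t * ((l : ℤ) : ℝ) ^ 2)) := by
    refine (summable_gauss_nat ht).congr fun l => ?_
    norm_num
  have h2 : Summable (fun l : ℕ => Real.exp (-t * ((-(l + 1) : ℤ) : ℝ) ^ 2)) := by
    refine (summable_gauss_nat1 ht).congr fun l => ?_
    congr 1
    push_cast
    ring
  have key :
      ∑' l : ℤ, Real.exp (-t * (l : ℝ) ^ 2)
        = (∑' l : ℕ, Real.exp (-t * ((l : ℤ) : ℝ) ^ 2))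
          + ∑' l : ℕ, Real.exp (-t * ((-(l + 1) : ℤ) : ℝ) ^ 2) :=
    tsum_of_nat_of_neg_add_one h1 h2
  rw [key, Summable.tsum_eq_zero_add h1]
  have e1 : ∑' l : ℕ, Real.exp (-t * ((-(l + 1) : ℤ) : ℝ) ^ 2)
      = ∑' l : ℕ, Real.exp (-t * ((l:ℝ) + 1) ^ 2) := by
    refine tsum_congr fun l => ?_
    congr 1
    push_cast
    ring
  have e2 : ∑' l : ℕ, Real.exp (-t * (((l + 1 : ℕ) : ℤ) : ℝ) ^ 2)
      = ∑' l : ℕ, Real.exp (-t * ((l:ℝ) + 1) ^ 2) := by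
    refine tsum_congr fun l => ?_
    congr 1
    push_cast
    ring
  rw [e1, e2]
  norm_num
  ring

lemma tsum_nat1_le_integral {t : ℝ} (ht : 0 < t) :
    ∑' l : ℕ, Real.exp (-t * ((l:ℝ) + 1) ^ 2) ≤ Real.sqrt (Real.pi / t) / 2 := by
  apply Real.tsum_le_of_sum_range_le (fun _ => (Real.exp_pos _).le)
  intro L
  have hanti : AntitoneOn (fun x : ℝ => Real.exp (-t * x ^ 2)) (Set.Icc 0 (0 + (L:ℝ))) := by
    intro x hx y hy hxy
    dsimp only
    rw [Real.exp_le_exp]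
    nlinarith [mul_nonneg ht.le (mul_nonneg (sub_nonneg.2 hxy)
      (show (0:ℝ) ≤ x + y by cases hx with | intro h1 h2 => linarith))]
  have h := hanti.sum_le_integral
  simp only [zero_add] at h
  have hL : ∑ i ∈ Finset.range L, Real.exp (-t * ((i:ℝ) + 1) ^ 2)
      = ∑ i ∈ Finset.range L, Real.exp (-t * (((i + 1 : ℕ) : ℝ)) ^ 2) := by
    refine Finset.sum_congr rfl fun i _ => ?_
    push_cast
    ring_nf
  rw [hL]
  refine le_trans h ?_
  rw [intervalIntegral.integral_of_le (by positivity : (0:ℝ) ≤ (L:ℝ))]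
  have hint : MeasureTheory.IntegrableOn (fun x : ℝ => Real.exp (-t * x ^ 2)) (Set.Ioi 0) :=
    (integrable_exp_neg_mul_sq ht).integrableOn
  calc ∫ x in Set.Ioc 0 (L:ℝ), Real.exp (-t * x ^ 2)
      ≤ ∫ x in Set.Ioi (0:ℝ), Real.exp (-t * x ^ 2) := by
        apply MeasureTheory.setIntegral_mono_set hint
        · exact MeasureTheory.ae_of_all _ fun x => (Real.exp_pos _).le
        · exact HasSubset.Subset.eventuallyLE Set.Ioc_subset_Ioi_self
    _ = Real.sqrt (Real.pi / t) / 2 := integral_gaussian_Ioi t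

lemma tsum_int_poisson_ge (n : ℕ) [NeZero n] :
    Real.sqrt ((n:ℝ) / 2) ≤ ∑' l : ℤ, Real.exp (-(2 * Real.pi / n) * (l : ℝ) ^ 2) := by
  have hn : (0:ℝ) < n := npos
  have h := Real.tsum_exp_neg_mul_int_sq (a := 2 / (n:ℝ)) (by positivity)
  have hL : ∑' l : ℤ, Real.exp (-Real.pi * (2 / (n:ℝ)) * (l:ℝ) ^ 2)
      = ∑' l : ℤ, Real.exp (-(2 * Real.pi / n) * (l : ℝ) ^ 2) := by
    refine tsum_congr fun l => ?_
    congr 1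
    ring
  rw [hL] at h
  rw [h]
  have hs : Summable (fun l : ℤ => Real.exp (-Real.pi / (2 / (n:ℝ)) * (l:ℝ) ^ 2)) := by
    refine (summable_gauss_int (t := Real.pi / (2 / (n:ℝ))) (by positivity)).congr fun l => ?_
    congr 1
    ring
  have h1 : (1:ℝ) ≤ ∑' l : ℤ, Real.exp (-Real.pi / (2 / (n:ℝ)) * (l:ℝ) ^ 2) := by
    have := Summable.le_tsum hs 0 (fun b _ => (Real.exp_pos _).le)
    simpa using this
  have hcoef : (1:ℝ) / (2 / (n:ℝ)) ^ ((1:ℝ)/2) = Real.sqrt ((n:ℝ) / 2) := by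
    rw [← Real.sqrt_eq_rpow, one_div, ← Real.sqrt_inv, inv_div]
  rw [hcoef]
  exact le_mul_of_one_le_right (Real.sqrt_nonneg _) h1

end SqrtAux2
namespace SqrtAux4
open Real Finset
open SqrtAux SqrtAux2

lemma sum_zmod_val {M : Type*} [AddCommMonoid M] (n : ℕ) [NeZero n] (h : ℕ → M) :
    ∑ j : ZMod n, h j.val = ∑ i ∈ Finset.range n, h i := by
  rw [← Fin.sum_univ_eq_sum_range]
  refine (Fintype.sum_bijective (fun i : Fin n => ((i : ℕ) : ZMod n)) ?_
    (fun i : Fin n => h i) (fun j : ZMod n => h j.val) ?_).symm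
  · rw [Fintype.bijective_iff_injective_and_card]
    constructor
    · intro i j hij
      have h2 := congrArg ZMod.val hij
      simp only [ZMod.val_cast_of_lt i.isLt, ZMod.val_cast_of_lt j.isLt] at h2
      exact Fin.ext h2
    · simp [ZMod.card]
  · intro i
    exact congrArg h (ZMod.val_cast_of_lt i.isLt).symm

variable {n : ℕ} [NeZero n]

lemma exp_half : Real.exp (-(2 * Real.pi)) ≤ 1/2 := by
  have h1 : Real.exp (-(2 * Real.pi)) ≤ Real.exp (-1) := by
    rw [Real.exp_le_exp]
    nlinarith [Real.pi_gt_three]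
  have h2 : (2:ℝ) ≤ Real.exp 1 := by
    have := Real.add_one_le_exp (1:ℝ)
    linarith
  have h3 : Real.exp (-1) ≤ 1/2 := by
    rw [Real.exp_neg, ← one_div]
    exact one_div_le_one_div_of_le (by norm_num) h2
  exact h1.trans h3

lemma sum_gg_sq_ge (hn3 : 3 ≤ n) :
    Real.sqrt ((n:ℝ)/2) - 1 ≤ ∑ j : ZMod n, (gg n j)^2 := by
  have hn : (0:ℝ) < n := npos
  have hapos : 0 < 2 * Real.pi / n := by positivity
  set a : ℝ := 2 * Real.pi / n with ha
  have hterm : ∀ j : ZMod n,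
      Real.exp (-a * (j.val:ℝ)^2) + Real.exp (-a * ((n:ℝ) - j.val)^2) ≤ (gg n j)^2 := by
    intro j
    have hs := summable_gg (n := n) (j.val : ℝ)
    have hsum2 : Real.exp (-Real.pi * ((j.val:ℝ) + (0:ℤ) * n)^2 / n)
        + Real.exp (-Real.pi * ((j.val:ℝ) + (-1:ℤ) * n)^2 / n) ≤ gg n j := by
      have h := Summable.sum_le_tsum ({0, -1} : Finset ℤ) (fun b _ => (Real.exp_pos _).le) hs
      rwa [Finset.sum_pair (by decide : (0:ℤ) ≠ -1)] at h
    have e0 : Real.exp (-Real.pi * ((j.val:ℝ) + (0:ℤ) * n)^2 / n)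
        = Real.exp (-Real.pi * (j.val:ℝ)^2 / n) := by norm_num
    have e1 : Real.exp (-Real.pi * ((j.val:ℝ) + (-1:ℤ) * n)^2 / n)
        = Real.exp (-Real.pi * ((n:ℝ) - (j.val:ℝ))^2 / n) := by
      push_cast
      congr 1
      ring
    rw [e0, e1] at hsum2
    have hx : Real.exp (-a * (j.val:ℝ)^2) = Real.exp (-Real.pi * (j.val:ℝ)^2 / n) ^ 2 := by
      rw [← Real.exp_nat_mul]
      congr 1
      push_cast
      ring
    have hy : Real.exp (-a * ((n:ℝ) - j.val)^2)
        = Real.exp (-Real.pi * ((n:ℝ) - (j.val:ℝ))^2 / n) ^ 2 := by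
      rw [← Real.exp_nat_mul]
      congr 1
      push_cast
      ring
    rw [hx, hy]
    nlinarith [hsum2, Real.exp_pos (-Real.pi * (j.val:ℝ)^2 / n),
      Real.exp_pos (-Real.pi * ((n:ℝ) - (j.val:ℝ))^2 / n), gg_nonneg j,
      mul_pos (Real.exp_pos (-Real.pi * (j.val:ℝ)^2 / n))
        (Real.exp_pos (-Real.pi * ((n:ℝ) - (j.val:ℝ))^2 / n))]
  have hsum : (∑ j : ZMod n, Real.exp (-a * (j.val:ℝ)^2))
      + (∑ j : ZMod n, Real.exp (-a * ((n:ℝ) - j.val)^2)) ≤ ∑ j : ZMod n, (gg n j)^2 := by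
    rw [← Finset.sum_add_distrib]
    exact Finset.sum_le_sum fun j _ => hterm j
  have hA : ∑ j : ZMod n, Real.exp (-a * (j.val:ℝ)^2)
      = ∑ d ∈ Finset.range n, Real.exp (-a * (d:ℝ)^2) :=
    sum_zmod_val n (fun d => Real.exp (-a * (d:ℝ)^2))
  have hB : ∑ j : ZMod n, Real.exp (-a * ((n:ℝ) - j.val)^2)
      = ∑ d ∈ Finset.range n, Real.exp (-a * ((n:ℝ) - d)^2) :=
    sum_zmod_val n (fun d => Real.exp (-a * ((n:ℝ) - d)^2))
  set f : ℕ → ℝ := fun d => Real.exp (-a * ((d:ℝ) + 1)^2) with hf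
  obtain ⟨m, hm⟩ : ∃ m, n = m + 1 :=
    ⟨n - 1, (Nat.succ_pred_eq_of_pos (Nat.pos_of_ne_zero (NeZero.ne n))).symm⟩
  have hA2 : ∑ d ∈ Finset.range n, Real.exp (-a * (d:ℝ)^2)
      = (∑ i ∈ Finset.range m, f i) + 1 := by
    rw [hm, Finset.sum_range_succ']
    congr 1
    · refine Finset.sum_congr rfl fun i _ => ?_
      simp only [hf]
      congr 1
      push_cast
      ring
    · norm_num
  have hB2 : ∑ d ∈ Finset.range n, Real.exp (-a * ((n:ℝ) - d)^2)
      = ∑ i ∈ Finset.range n, f i := by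
    rw [← Finset.sum_range_reflect f n]
    refine Finset.sum_congr rfl fun i hi => ?_
    have hi' : i < n := Finset.mem_range.1 hi
    simp only [hf]
    have hcast : ((n - 1 - i : ℕ) : ℝ) = (n:ℝ) - 1 - i := by
      have h1 : i ≤ n - 1 := Nat.le_pred_of_lt hi'
      have h2 : (1:ℕ) ≤ n := by omega
      rw [Nat.cast_sub h1, Nat.cast_sub h2]
      norm_num
    rw [hcast]
    congr 1
    ring
  have hBB : ∑ i ∈ Finset.range m, f i ≤ ∑ i ∈ Finset.range n, f i :=
    Finset.sum_le_sum_of_subset_of_nonneg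
      (Finset.range_subset_range.2 (by omega)) (fun i _ _ => (Real.exp_pos _).le)
  have hsf : Summable f := summable_gauss_nat1 hapos
  have hCD : (∑ i ∈ Finset.range m, f i) + ∑' i : ℕ, f (i + m) = ∑' i : ℕ, f i :=
    Summable.sum_add_tsum_nat_add m hsf
  set r : ℝ := Real.exp (-(2 * Real.pi)) with hr
  have hr0 : 0 < r := Real.exp_pos _
  have hrh : r ≤ 1/2 := exp_half
  have hr1 : r < 1 := lt_of_le_of_lt hrh (by norm_num)
  have hbound : ∀ i : ℕ, f (i + m) ≤ r ^ i * r ^ n := by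
    intro i
    have h1 : f (i + m) = Real.exp (-a * ((i:ℝ) + n)^2) := by
      simp only [hf]
      congr 1
      rw [hm]
      push_cast
      ring
    have han : a * n = 2 * Real.pi := by
      rw [ha]
      field_simp
    have h2 : -a * ((i:ℝ) + n)^2 ≤ -(2 * Real.pi) * ((i:ℝ) + n) := by
      have hin : (0:ℝ) ≤ (i:ℝ) := Nat.cast_nonneg i
      have key : (n:ℝ) * ((i:ℝ) + n) ≤ ((i:ℝ) + n)^2 := by nlinarith
      nlinarith [mul_le_mul_of_nonneg_left key hapos.le]
    calc f (i + m) = Real.exp (-a * ((i:ℝ) + n)^2) := h1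
      _ ≤ Real.exp (-(2 * Real.pi) * ((i:ℝ) + n)) := Real.exp_le_exp.2 h2
      _ = r ^ (i + n) := by
          rw [hr, ← Real.exp_nat_mul]
          congr 1
          push_cast
          ring
      _ = r ^ i * r ^ n := pow_add r i n
  have htails : Summable (fun i : ℕ => f (i + m)) := (summable_nat_add_iff m).2 hsf
  have hgs : Summable (fun i : ℕ => r ^ i * r ^ n) :=
    (summable_geometric_of_lt_one hr0.le hr1).mul_right _
  have htail : ∑' i : ℕ, f (i + m) ≤ 1/4 := by
    have h := Summable.tsum_le_tsum hbound htails hgs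
    rw [tsum_mul_right, tsum_geometric_of_lt_one hr0.le hr1] at h
    refine h.trans ?_
    have h1 : (1 - r)⁻¹ ≤ 2 := by
      have := inv_anti₀ (by norm_num : (0:ℝ) < 1/2) (by linarith : 1/2 ≤ 1 - r)
      simpa using this
    have h2 : r ^ n ≤ 1/8 := by
      calc r ^ n ≤ r ^ 3 := pow_le_pow_of_le_one hr0.le hr1.le hn3
        _ ≤ (1/2) ^ 3 := pow_le_pow_left₀ hr0.le hrh 3
        _ = 1/8 := by norm_num
    calc (1 - r)⁻¹ * r ^ n ≤ 2 * (1/8) := mul_le_mul h1 h2 (by positivity) (by norm_num)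
      _ = 1/4 := by norm_num
  have hD : Real.sqrt ((n:ℝ)/2) ≤ 1 + 2 * ∑' i : ℕ, f i := by
    have hp := tsum_int_poisson_ge n
    rw [← ha] at hp
    have hd := tsum_int_decomp (t := a) hapos
    rw [hd] at hp
    simpa only [hf] using hp
  rw [hA, hB, hA2, hB2] at hsum
  linarith [hsum, htail, hD, hCD, hBB]

end SqrtAux4
namespace SqrtAux5
open Real Finset
open SqrtAux SqrtAux2 SqrtAux4

variable {n : ℕ} [NeZero n]

lemma sum_gg_le : ∑ j : ZMod n, gg n j ≤ Real.sqrt n + 1 := by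
  have hn : (0:ℝ) < n := npos
  have ht : 0 < Real.pi / n := by positivity
  rw [sum_gg_eq]
  have hconv : ∑' l : ℤ, Real.exp (-Real.pi * (l:ℝ)^2 / n)
      = ∑' l : ℤ, Real.exp (-(Real.pi/n) * (l:ℝ)^2) :=
    tsum_congr fun l => by congr 1; ring
  rw [hconv, tsum_int_decomp ht]
  have hT := tsum_nat1_le_integral ht
  have hid : Real.sqrt (Real.pi / (Real.pi/n)) = Real.sqrt n := by
    congr 1
    field_simp
  rw [hid] at hT
  linarith

lemma dft_gg (k : ZMod n) :
    ∑ j : ZMod n, (gg n j : ℂ) *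
        Complex.exp (-(2 * (Real.pi : ℂ) * Complex.I * (j.val : ℂ) * (k.val : ℂ)) / n)
      = (Real.sqrt n : ℂ) * (gg n k : ℂ) := by
  have hn : (0:ℝ) < n := npos
  have hnne : ((n:ℝ)) ≠ 0 := ne_of_gt hn
  have hnC : (n:ℂ) ≠ 0 := Nat.cast_ne_zero.mpr (NeZero.ne n)
  set b : ℂ := -(Complex.I * (k.val : ℂ) / n) with hb
  set f : ℤ → ℂ := fun l =>
    Complex.exp (-(Real.pi:ℂ) * (((n:ℝ)⁻¹ : ℝ) : ℂ) * (l:ℂ)^2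
      + 2 * (Real.pi:ℂ) * b * (l:ℂ)) with hfd
  have hz : ∀ l : ℤ, -(Real.pi:ℂ) * (((n:ℝ)⁻¹ : ℝ):ℂ) * (l:ℂ)^2 + 2*(Real.pi:ℂ)*b*(l:ℂ)
      = ((-Real.pi * (l:ℝ)^2 / n : ℝ) : ℂ)
        + ((-(2*Real.pi*(l:ℝ)*(k.val:ℝ)/n) : ℝ) : ℂ) * Complex.I := by
    intro l
    rw [hb]
    push_cast
    field_simp [hnC]
  have hf : Summable f := by
    apply Summable.of_norm
    have heq : ∀ l : ℤ, ‖f l‖ = Real.exp (-(Real.pi/(n:ℝ)) * (l:ℝ)^2) := by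
      intro l
      rw [hfd]
      dsimp only
      rw [hz l, Complex.norm_exp]
      congr 1
      simp only [Complex.add_re, Complex.ofReal_re, Complex.mul_re, Complex.ofReal_im,
        Complex.I_re, Complex.I_im]
      ring
    refine ((summable_gauss_int (t := Real.pi/(n:ℝ)) (by positivity)).congr
      fun l => (heq l).symm)
  have step1 : ∑ j : ZMod n, (gg n j : ℂ) *
      Complex.exp (-(2 * (Real.pi : ℂ) * Complex.I * (j.val : ℂ) * (k.val : ℂ)) / n)
      = ∑' l : ℤ, f l := by
    rw [← sum_zmod_tsum n f hf]
    refine Finset.sum_congr rfl fun j _ => ?_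
    simp only [gg]
    rw [Complex.ofReal_tsum, ← tsum_mul_right]
    refine tsum_congr fun m => ?_
    rw [hfd]
    dsimp only
    rw [Complex.ofReal_exp, ← Complex.exp_add]
    have harg : (((-Real.pi * ((j.val:ℝ) + (m:ℝ)*(n:ℝ))^2 / n : ℝ)):ℂ)
          + (-(2 * (Real.pi:ℂ) * Complex.I * (j.val:ℂ) * (k.val:ℂ)) / n)
        = -(Real.pi:ℂ) * (((n:ℝ)⁻¹ : ℝ):ℂ) * ((((j.val:ℤ) + m*(n:ℤ) : ℤ)):ℂ)^2
          + 2*(Real.pi:ℂ)*b*((((j.val:ℤ) + m*(n:ℤ) : ℤ)):ℂ)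
          + -((-(m * (k.val:ℤ)) : ℤ):ℂ) * (2*(Real.pi:ℂ)*Complex.I) := by
      rw [hb]
      push_cast
      field_simp [hnC]
      ring
    rw [harg]
    rw [Complex.exp_add]
    have hone : Complex.exp (-((-(m * (k.val:ℤ)) : ℤ):ℂ) * (2*(Real.pi:ℂ)*Complex.I)) = 1 := by
      have := Complex.exp_int_mul_two_pi_mul_I (m * (k.val:ℤ))
      rw [← this]
      congr 1
      push_cast
      ring
    rw [hone, mul_one]
  have step2 : ∑' l : ℤ, f l = (Real.sqrt n : ℂ) * (gg n k : ℂ) := by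
    have haRe : 0 < ((((n:ℝ)⁻¹ : ℝ):ℂ)).re := by
      rw [Complex.ofReal_re]
      positivity
    have hP := Complex.tsum_exp_neg_quadratic haRe b
    rw [hfd]
    dsimp only
    rw [hP]
    have hcoef : 1 / ((((n:ℝ)⁻¹ : ℝ):ℂ) ^ ((1:ℂ)/2)) = ((Real.sqrt n : ℝ):ℂ) := by
      rw [show ((1:ℂ)/2) = (((1/2 : ℝ) : ℝ):ℂ) by norm_num]
      rw [← Complex.ofReal_cpow (by positivity)]
      rw [← Real.sqrt_eq_rpow]
      rw [Real.sqrt_inv]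
      rw [Complex.ofReal_inv, one_div, inv_inv]
    rw [hcoef]
    congr 1
    have hterm : ∀ l : ℤ,
        Complex.exp (-(Real.pi:ℂ) / (((n:ℝ)⁻¹ : ℝ):ℂ) * ((l:ℂ) + Complex.I*b)^2)
        = ((Real.exp (-Real.pi * ((k.val:ℝ) + (l:ℝ)*(n:ℝ))^2 / n) : ℝ) : ℂ) := by
      intro l
      rw [Complex.ofReal_exp]
      congr 1
      rw [hb]
      have hIb : Complex.I * (-(Complex.I * (k.val:ℂ) / n)) = (k.val:ℂ)/n := by
        rw [mul_neg, mul_div_assoc, ← mul_assoc, Complex.I_mul_I]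
        ring
      rw [hIb]
      push_cast
      field_simp [hnC]
      ring
    simp only [gg]
    rw [Complex.ofReal_tsum]
    exact tsum_congr hterm
  rw [step1, step2]

end SqrtAux5

namespace SqrtAux6
open Real Finset
open SqrtAux SqrtAux2 SqrtAux4 SqrtAux5

variable {n : ℕ} [NeZero n]

lemma mulVec_gg :
    (dftMatrix n).mulVec (fun j => (gg n j : ℂ)) = fun k => (gg n k : ℂ) := by
  funext kk
  have hn : (0:ℝ) < n := npos
  have hs : Real.sqrt n ≠ 0 := ne_of_gt (Real.sqrt_pos.2 hn)
  simp only [Matrix.mulVec, dotProduct, dftMatrix, Matrix.of_apply]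
  have hcomm : ∀ j : ZMod n,
      ((1 / Real.sqrt n : ℝ) : ℂ) *
          Complex.exp (-(2 * (Real.pi : ℂ) * Complex.I * (j.val : ℂ) * (kk.val : ℂ)) / n)
          * (gg n j : ℂ)
      = ((1 / Real.sqrt n : ℝ) : ℂ) * ((gg n j : ℂ) *
          Complex.exp (-(2 * (Real.pi : ℂ) * Complex.I * (j.val : ℂ) * (kk.val : ℂ)) / n)) :=
    fun j => by ring
  rw [Finset.sum_congr rfl fun j _ => hcomm j, ← Finset.mul_sum, dft_gg kk]
  rw [← Complex.ofReal_mul, ← Complex.ofReal_mul]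
  congr 1
  field_simp

end SqrtAux6


open SqrtAux SqrtAux2 SqrtAux4 SqrtAux5 SqrtAux6 in
/-- The square-root bottleneck for demixing with `[I F]`: if the concatenation `[I F]`
of the identity with the DFT matrix satisfies the `(k,c)`-width property, then
`k ≤ 2c²(√n + 1)²/(√(n/2) − 1)`, i.e. `k = O(√n)`. -/
theorem square_root_bottleneck (n : ℕ) [NeZero n] (hn : 3 ≤ n) (k : ℕ) (hk : 0 < k)
    (c : ℝ) (hc : 0 < c)
    (hwidth : ∀ v : (ZMod n ⊕ ZMod n) → ℂ,
      (Matrix.fromCols (1 : Matrix (ZMod n) (ZMod n) ℂ) (dftMatrix n)).mulVec v = 0 →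
      Real.sqrt (norm2sq v) ≤ c / Real.sqrt k * norm1 v) :
    (k : ℝ) ≤ 2 * c ^ 2 * (Real.sqrt n + 1) ^ 2 / (Real.sqrt ((n : ℝ) / 2) - 1) := by

  have hnpos : (0:ℝ) < n := npos
  set v : (ZMod n ⊕ ZMod n) → ℂ :=
    Sum.elim (fun j => -(gg n j : ℂ)) (fun j => (gg n j : ℂ)) with hv
  have hnull : (Matrix.fromCols (1 : Matrix (ZMod n) (ZMod n) ℂ) (dftMatrix n)).mulVec v
      = 0 := by
    rw [hv, Matrix.fromCols_mulVec_sumElim, Matrix.one_mulVec, mulVec_gg]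
    funext kk
    simp
  have hw := hwidth v hnull
  set S1 : ℝ := ∑ j : ZMod n, gg n j with hS1d
  set S2 : ℝ := ∑ j : ZMod n, (gg n j) ^ 2 with hS2d
  have habs1 : ∀ j : ZMod n, ‖((gg n j : ℂ))‖ = gg n j := fun j => by
    rw [Complex.norm_real, Real.norm_eq_abs, abs_of_nonneg (gg_nonneg j)]
  have hn1 : norm1 v = 2 * S1 := by
    simp only [norm1, hv, Fintype.sum_sum_type, Sum.elim_inl, Sum.elim_inr, norm_neg]
    simp only [habs1]
    rw [hS1d]
    ring
  have hn2 : norm2sq v = 2 * S2 := by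
    simp only [norm2sq, hv, Fintype.sum_sum_type, Sum.elim_inl, Sum.elim_inr, norm_neg]
    simp only [habs1]
    rw [hS2d]
    ring
  rw [hn1, hn2] at hw
  have hS1le : S1 ≤ Real.sqrt n + 1 := sum_gg_le
  have hS1nn : (0:ℝ) ≤ S1 := Finset.sum_nonneg fun j _ => gg_nonneg j
  have hS2ge : Real.sqrt ((n:ℝ)/2) - 1 ≤ S2 := sum_gg_sq_ge hn
  have hden : 0 < Real.sqrt ((n:ℝ)/2) - 1 := by
    have h1 : (1:ℝ) < Real.sqrt ((n:ℝ)/2) := by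
      rw [show (1:ℝ) = Real.sqrt 1 from Real.sqrt_one.symm]
      apply Real.sqrt_lt_sqrt (by norm_num)
      have : (3:ℝ) ≤ n := by exact_mod_cast hn
      linarith
    linarith
  have hS2pos : 0 < S2 := lt_of_lt_of_le hden hS2ge
  have hkpos : (0:ℝ) < k := by exact_mod_cast hk
  have hksq : 0 < Real.sqrt k := Real.sqrt_pos.2 hkpos
  have h2 : Real.sqrt k * Real.sqrt (2*S2) ≤ 2*c*S1 := by
    calc Real.sqrt k * Real.sqrt (2*S2)
        ≤ Real.sqrt k * (c / Real.sqrt k * (2*S1)) :=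
          mul_le_mul_of_nonneg_left hw (Real.sqrt_nonneg (k:ℝ))
      _ = 2*c*S1 := by field_simp
  have h3 : (k:ℝ) * (2*S2) ≤ (2*c*S1) * (2*c*S1) := by
    have hnn : 0 ≤ Real.sqrt k * Real.sqrt (2*S2) := by positivity
    have hmul := mul_self_le_mul_self hnn h2
    calc (k:ℝ) * (2*S2)
        = (Real.sqrt k * Real.sqrt (2*S2)) * (Real.sqrt k * Real.sqrt (2*S2)) := by
          rw [mul_mul_mul_comm, Real.mul_self_sqrt hkpos.le,
            Real.mul_self_sqrt (by positivity)]
      _ ≤ (2*c*S1) * (2*c*S1) := hmul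
  rw [le_div_iff₀ hden]
  calc (k:ℝ) * (Real.sqrt ((n:ℝ)/2) - 1)
      ≤ (k:ℝ) * S2 := mul_le_mul_of_nonneg_left hS2ge hkpos.le
    _ ≤ 2*c^2*S1^2 := by nlinarith [h3]
    _ ≤ 2 * c ^ 2 * (Real.sqrt n + 1) ^ 2 := by
        nlinarith [mul_self_le_mul_self hS1nn hS1le, sq_nonneg c, hc.le]
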